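/- Let ℓ ≥ 1 be an integer and set c₀ = (1/(2ℓ))·(1 − 1/(2ℓ))^{2ℓ−1}. Then for every real c ≥ c₀, the univariate real polynomial s_c(t) = 1 + t + c·t^{2ℓ} is a sum of squares of polynomials in ℝ[t]. -/

import Mathlib

open Polynomial

/-- A univariate real polynomial is a sum of squares. -/
def IsSOSPoly (p : Polynomial ℝ) : Prop :=
  ∃ (m : ℕ) (q : Fin m → Polynomial ℝ), p = ∑ i, q i ^ 2

lemma IsSOSPoly.add {p q : Polynomial ℝ} (hp : IsSOSPoly p) (hq : IsSOSPoly q) :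
    IsSOSPoly (p + q) := by
  obtain ⟨m, f, rfl⟩ := hp
  obtain ⟨n, g, rfl⟩ := hq
  exact ⟨m + n, Fin.append f g, by simp [Fin.sum_univ_add]⟩

lemma IsSOSPoly.sq_mul {p q : Polynomial ℝ} (hq : IsSOSPoly q) :
    IsSOSPoly (p ^ 2 * q) := by
  obtain ⟨n, g, rfl⟩ := hq
  exact ⟨n, fun i => p * g i, by rw [Finset.mul_sum]; simp [mul_pow]⟩

lemma isSOSPoly_const {a : ℝ} (ha : 0 ≤ a) : IsSOSPoly (C a) :=
  ⟨1, fun _ => C (Real.sqrt a), by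
    simp [← C_pow, Real.sq_sqrt ha]⟩

/-- A univariate real polynomial that is everywhere nonnegative is a sum of squares. -/
lemma isSOSPoly_of_nonneg : ∀ (n : ℕ) (p : Polynomial ℝ), p.natDegree ≤ n →
    (∀ x : ℝ, 0 ≤ p.eval x) → IsSOSPoly p := by
  intro n
  induction n using Nat.strong_induction_on with
  | _ n ih =>
    intro p hdeg hpos
    -- a global minimum point
    obtain ⟨a, ha⟩ := p.exists_forall_norm_le
    have hmin : ∀ y : ℝ, p.eval a ≤ p.eval y := by
      intro y
      have := ha y
      rwa [Real.norm_of_nonneg (hpos a), Real.norm_of_nonneg (hpos y)] at this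
    set m : ℝ := p.eval a with hm
    have hm0 : 0 ≤ m := hpos a
    set q : Polynomial ℝ := p - C m with hqdef
    have hq_eval : ∀ y : ℝ, q.eval y = p.eval y - m := by intro y; simp [hqdef]
    have hq_nonneg : ∀ y : ℝ, 0 ≤ q.eval y := by
      intro y; rw [hq_eval]; linarith [hmin y]
    have hq_a : q.eval a = 0 := by rw [hq_eval]; ring
    have hp_eq : p = q + C m := by rw [hqdef]; ring
    by_cases hq0 : q = 0
    · rw [hp_eq, hq0, zero_add]
      exact isSOSPoly_const hm0
    · -- a is a root of q and of its derivative
      have hminon : IsMinOn (fun x : ℝ => q.eval x) Set.univ a := by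
        rw [isMinOn_univ_iff]
        intro y
        simp only [hq_eval]
        linarith [hmin y]
      have hlocmin : IsLocalMin (fun x : ℝ => q.eval x) a :=
        hminon.isLocalMin (by simp)
      have hderiv : q.derivative.eval a = 0 := by
        rw [← Polynomial.deriv]
        exact hlocmin.deriv_eq_zero
      -- factor out (X - C a)^2
      obtain ⟨r, hr⟩ := (dvd_iff_isRoot.2 hq_a : (X - C a) ∣ q)
      have hra : r.eval a = 0 := by
        have := congrArg (fun f => Polynomial.eval a (Polynomial.derivative f)) hr
        simp only [derivative_mul, derivative_sub, derivative_X, derivative_C,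
          sub_zero, one_mul, eval_add, eval_mul, eval_sub, eval_X, eval_C,
          sub_self, zero_mul, zero_add] at this
        rw [hderiv] at this
        linarith [this]
      obtain ⟨s, hs⟩ := (dvd_iff_isRoot.2 hra : (X - C a) ∣ r)
      have hq_fact : q = (X - C a) ^ 2 * s := by rw [hr, hs]; ring
      have hs0 : s ≠ 0 := by
        intro h; apply hq0; rw [hq_fact, h, mul_zero]
      -- s is nonnegative
      have hs_nonneg : ∀ x : ℝ, 0 ≤ s.eval x := by
        intro x
        rcases eq_or_ne x a with rfl | hxa
        · -- limit argument
          have h1 : Filter.Tendsto (fun y : ℝ => s.eval y) (nhdsWithin x {x}ᶜ)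
              (nhds (s.eval x)) :=
            (s.continuous_aeval.tendsto x).mono_left nhdsWithin_le_nhds
          refine ge_of_tendsto h1 ?_
          filter_upwards [self_mem_nhdsWithin] with y hy
          have hyx : y ≠ x := hy
          have := hq_nonneg y
          rw [hq_fact] at this
          simp only [eval_mul, eval_pow, eval_sub, eval_X, eval_C] at this
          have hyx' : y - x ≠ 0 := sub_ne_zero.2 hyx
          have hpos2 : 0 < (y - x) ^ 2 := by positivity
          nlinarith [this, hpos2]
        · have := hq_nonneg x
          rw [hq_fact] at this
          simp only [eval_mul, eval_pow, eval_sub, eval_X, eval_C] at this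
          have hpos2 : 0 < (x - a) ^ 2 := by
            have : x - a ≠ 0 := sub_ne_zero.2 hxa
            positivity
          nlinarith [this, hpos2]
      -- degree bound
      have hqdeg : q.natDegree ≤ n := by
        calc q.natDegree ≤ max p.natDegree (C m).natDegree := natDegree_sub_le p (C m)
        _ ≤ n := by simp [natDegree_C]; exact hdeg
      have hXa : (X - C a) ^ 2 ≠ (0 : Polynomial ℝ) := by
        apply pow_ne_zero; exact X_sub_C_ne_zero a
      have hdq : q.natDegree = 2 + s.natDegree := by
        rw [hq_fact, natDegree_mul hXa hs0]
        simp [natDegree_pow]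
      have hsd : s.natDegree < n := by omega
      have hsos_s : IsSOSPoly s := ih s.natDegree hsd s le_rfl hs_nonneg
      rw [hp_eq, hq_fact]
      exact (hsos_s.sq_mul).add (isSOSPoly_const hm0)

/-- The key analytic inequality, via Young's inequality. -/
lemma key_ineq (ℓ : ℕ) (hℓ : 1 ≤ ℓ) (s : ℝ) (hs : 0 ≤ s) :
    s ≤ 1 + (1 / (2 * (ℓ : ℝ))) * (1 - 1 / (2 * (ℓ : ℝ))) ^ (2 * ℓ - 1) * s ^ (2 * ℓ) := by
  have hℓ1 : (1 : ℝ) ≤ ℓ := by exact_mod_cast hℓ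
  have h2ℓ : (2 : ℝ) ≤ 2 * (ℓ : ℝ) := by linarith
  set L : ℝ := 2 * (ℓ : ℝ) with hL
  have hLpos : 0 < L := by linarith
  set lam : ℝ := 1 - 1 / L with hlam
  have hlam_pos : 0 < lam := by
    have : 1 / L ≤ 1 / 2 := by
      apply div_le_div_of_nonneg_left <;> linarith
    simp only [hlam]; linarith
  have hconj : L.HolderConjugate (L / (L - 1)) :=
    (Real.holderConjugate_iff_eq_conjExponent (by linarith)).2 rfl
  have hy := Real.young_inequality_of_nonneg
    (mul_nonneg hlam_pos.le hs) (zero_le_one) hconj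
  rw [Real.one_rpow] at hy
  have hq1 : (1 : ℝ) / (L / (L - 1)) = lam := by
    rw [one_div, hlam]
    field_simp
  have hrw : (lam * s) ^ L = (lam * s) ^ (2 * ℓ) := by
    rw [hL, ← Real.rpow_natCast (lam * s) (2 * ℓ)]
    norm_num
  rw [hrw] at hy
  -- hy : lam * s * 1 ≤ (lam*s)^(2ℓ) / L + 1/(L/(L-1))
  rw [mul_one, hq1] at hy
  have hexp : lam ^ (2 * ℓ) = lam ^ (2 * ℓ - 1) * lam := by
    have h21 : 2 * ℓ = (2 * ℓ - 1) + 1 := by omega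
    conv_lhs => rw [h21]
    rw [pow_succ]
  have hy2 : lam * s ≤ lam ^ (2 * ℓ - 1) * lam * s ^ (2 * ℓ) / L + lam := by
    rw [mul_pow, hexp] at hy
    linarith [hy]
  have hfinal : lam * s ≤ lam * (1 + 1 / L * lam ^ (2 * ℓ - 1) * s ^ (2 * ℓ)) := by
    calc lam * s ≤ lam ^ (2 * ℓ - 1) * lam * s ^ (2 * ℓ) / L + lam := hy2
      _ = lam * (1 + 1 / L * lam ^ (2 * ℓ - 1) * s ^ (2 * ℓ)) := by
          field_simp
          ring
  exact le_of_mul_le_mul_left hfinal hlam_pos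

/-- For an integer `ℓ ≥ 1` and any `c ≥ c₀ = (1/(2ℓ))·(1 − 1/(2ℓ))^{2ℓ−1}`,
the univariate polynomial `s_c(t) = 1 + t + c·t^{2ℓ}` is a sum of squares. -/
theorem one_add_X_add_c_X_pow_isSOS (ℓ : ℕ) (hℓ : 1 ≤ ℓ) (c : ℝ)
    (hc : (1 / (2 * (ℓ : ℝ))) * (1 - 1 / (2 * (ℓ : ℝ))) ^ (2 * ℓ - 1) ≤ c) :
    IsSOSPoly (1 + X + C c * X ^ (2 * ℓ)) := by
  set c₀ : ℝ := (1 / (2 * (ℓ : ℝ))) * (1 - 1 / (2 * (ℓ : ℝ))) ^ (2 * ℓ - 1) with hc₀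
  apply isSOSPoly_of_nonneg (1 + X + C c * X ^ (2 * ℓ)).natDegree _ le_rfl
  intro t
  have heval : Polynomial.eval t (1 + X + C c * X ^ (2 * ℓ)) = 1 + t + c * t ^ (2 * ℓ) := by
    simp
  rw [heval]
  have htnn : 0 ≤ t ^ (2 * ℓ) := by rw [pow_mul]; positivity
  have habs : t ^ (2 * ℓ) = |t| ^ (2 * ℓ) := by
    rw [← abs_pow, abs_of_nonneg htnn]
  have hkey : |t| ≤ 1 + c₀ * |t| ^ (2 * ℓ) := key_ineq ℓ hℓ |t| (abs_nonneg t)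
  have h1 : -|t| ≤ t := neg_abs_le t
  have h2 : c₀ * |t| ^ (2 * ℓ) ≤ c * |t| ^ (2 * ℓ) := by
    apply mul_le_mul_of_nonneg_right hc (by positivity)
  rw [habs]
  linarith
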